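/- Let S and T be balanced bitstrings. If the unit of area (x,y) is between S and T, then the unit of area (2x+y+1, x+y) is between w(S) and w(T). -/
import Mathlib


/-- The substitution `w`, simultaneously replacing each `0` by `001` and each
`1` by `01`. -/
def wsub (S : List Bool) : List Bool :=
  S.flatMap (fun b => if b then [false, true] else [false, false, true])

/-- Two bitstrings are balanced if they have the same length and the same
number of ones. -/
def BalancedBits (S T : List Bool) : Prop :=
  S.length = T.length ∧ S.count true = T.count true

/-- `(x, y)` is below `S` if some prefix of `S` has at most `x` zeros and at
least `y + 1` ones. -/
def Below (S : List Bool) (x y : ℤ) : Prop :=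
  ∃ n ≤ S.length, ((S.take n).count false : ℤ) ≤ x ∧ y + 1 ≤ ((S.take n).count true : ℤ)

/-- `(x, y)` is above `S` if some prefix of `S` has at most `y` ones and at
least `x + 1` zeros. -/
def Above (S : List Bool) (x y : ℤ) : Prop :=
  ∃ n ≤ S.length, ((S.take n).count true : ℤ) ≤ y ∧ x + 1 ≤ ((S.take n).count false : ℤ)

/-- `(x, y)` is between `S` and `T` if it is above one and below the other. -/
def Between (S T : List Bool) (x y : ℤ) : Prop :=
  (Above S x y ∧ Below T x y) ∨ (Below S x y ∧ Above T x y)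

lemma wsub_append (A B : List Bool) : wsub (A ++ B) = wsub A ++ wsub B := by
  simp [wsub]

lemma count_len (l : List Bool) : l.count true + l.count false = l.length := by
  induction l with
  | nil => simp
  | cons b t ih => cases b <;> simp [List.count_cons] <;> omega

lemma count_true_wsub (P : List Bool) : (wsub P).count true = P.length := by
  induction P with
  | nil => simp [wsub]
  | cons b t ih =>
    have h : wsub (b :: t) = wsub [b] ++ wsub t := wsub_append [b] t
    rw [h, List.count_append, ih]
    cases b <;> simp [wsub] <;> omega

lemma count_false_wsub (P : List Bool) :
    (wsub P).count false = 2 * P.count false + P.count true := by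
  induction P with
  | nil => simp [wsub]
  | cons b t ih =>
    have h : wsub (b :: t) = wsub [b] ++ wsub t := wsub_append [b] t
    rw [h, List.count_append, ih]
    cases b <;> simp [wsub, List.count_cons] <;> omega

lemma below_of_prefix {M L : List Bool} (h : L <+: M) (x y : ℤ)
    (h1 : (L.count false : ℤ) ≤ x) (h2 : y + 1 ≤ (L.count true : ℤ)) : Below M x y := by
  refine ⟨L.length, h.length_le, ?_, ?_⟩ <;>
    rw [← List.prefix_iff_eq_take.mp h] <;> assumption

lemma above_of_prefix {M L : List Bool} (h : L <+: M) (x y : ℤ)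
    (h1 : (L.count true : ℤ) ≤ y) (h2 : x + 1 ≤ (L.count false : ℤ)) : Above M x y := by
  refine ⟨L.length, h.length_le, ?_, ?_⟩ <;>
    rw [← List.prefix_iff_eq_take.mp h] <;> assumption

lemma aux_pair (S T : List Bool) (hlen : S.length = T.length)
    (hcnt : S.count true = T.count true) (x y : ℤ)
    (hA : Above S x y) (hB : Below T x y) :
    Above (wsub S) (2 * x + y + 1) (x + y) ∧ Below (wsub T) (2 * x + y + 1) (x + y) := by
  obtain ⟨n, hn, hAo, hAz⟩ := hA
  obtain ⟨n', hn', hBz, hBo⟩ := hB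
  have hx0 : 0 ≤ x := le_trans (by positivity) hBz
  have hy0 : 0 ≤ y := le_trans (by positivity) hAo
  set m : ℕ := (x + y + 1).toNat with hmdef
  have hm : (m : ℤ) = x + y + 1 := Int.toNat_of_nonneg (by omega)
  -- length bound : m < S.length
  have hcfS : (x : ℤ) + 1 ≤ (S.count false : ℤ) := by
    have := ((List.take_prefix n S).sublist.count_le false)
    exact le_trans hAz (by exact_mod_cast this)
  have hctT : y + 1 ≤ (T.count true : ℤ) := by
    have := ((List.take_prefix n' T).sublist.count_le true)
    exact le_trans hBo (by exact_mod_cast this)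
  have hlenS := count_len S
  have hmlen : m < S.length := by
    have h1 : (S.length : ℤ) = S.count true + S.count false := by exact_mod_cast hlenS.symm
    have h2 : (S.count true : ℤ) = T.count true := by exact_mod_cast hcnt
    omega
  have hmT : m ≤ T.length := by omega
  have hmS : m ≤ S.length := by omega
  have hlenmT : (T.take m).length = m := by rw [List.length_take, min_eq_left hmT]
  have hlenmS : (S.take m).length = m := by rw [List.length_take, min_eq_left hmS]
  -- Claim A : count false of T.take m ≤ x
  have claimA : ((T.take m).count false : ℤ) ≤ x := by
    rcases le_or_gt m n' with hc | hc
    · have heq : T.take m = (T.take n').take m := by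
        rw [List.take_take, min_eq_left hc]
      have hsub := (List.take_prefix m (T.take n')).sublist.count_le false
      rw [← heq] at hsub
      exact le_trans (by exact_mod_cast hsub) hBz
    · have heq : T.take n' = (T.take m).take n' := by
        rw [List.take_take, min_eq_left (le_of_lt hc)]
      have hsub : (T.take n').count true ≤ (T.take m).count true := by
        rw [heq]; exact (List.take_prefix _ _).sublist.count_le _
      have hcl := count_len (T.take m)
      rw [hlenmT] at hcl
      omega
  -- Claim B : x + 1 ≤ count false of S.take m
  have claimB : x + 1 ≤ ((S.take m).count false : ℤ) := by
    rcases le_or_gt n m with hc | hc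
    · have heq : S.take n = (S.take m).take n := by
        rw [List.take_take, min_eq_left hc]
      have hsub := (List.take_prefix n (S.take m)).sublist.count_le false
      rw [← heq] at hsub
      exact le_trans hAz (by exact_mod_cast hsub)
    · have heq : S.take m = (S.take n).take m := by
        rw [List.take_take, min_eq_left (le_of_lt hc)]
      have hsub : (S.take m).count true ≤ (S.take n).count true := by
        rw [heq]; exact (List.take_prefix _ _).sublist.count_le _
      have hcl := count_len (S.take m)
      rw [hlenmS] at hcl
      omega
  constructor
  · -- Above (wsub S)
    have hne : S.take m ≠ [] := by
      intro hh
      have := congrArg List.length hh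
      rw [hlenmS] at this
      simp at this; omega
    obtain ⟨Q, b, hQb⟩ : ∃ Q b, S.take m = Q ++ [b] := by
      rcases List.eq_nil_or_concat (S.take m) with h' | ⟨Q, b, h'⟩
      · exact absurd h' hne
      · exact ⟨Q, b, by simpa using h'⟩
    have hlenQ : Q.length + 1 = m := by
      have := congrArg List.length hQb
      rw [hlenmS] at this
      simpa using this.symm
    have hclQ := count_len Q
    have hwS : wsub S = wsub Q ++ wsub [b] ++ wsub (S.drop m) := by
      rw [← wsub_append, ← wsub_append, ← hQb, List.take_append_drop]
    have hcfQm : (S.take m).count false = Q.count false + (if b then 0 else 1) := by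
      rw [hQb, List.count_append]
      cases b <;> simp
    cases b with
    | true =>
      have hpre : wsub Q ++ [false] <+: wsub S := by
        refine ⟨[true] ++ wsub (S.drop m), ?_⟩
        rw [hwS]; simp [wsub]
      refine above_of_prefix hpre _ _ ?_ ?_
      · rw [List.count_append, count_true_wsub]
        simp only [if_pos] at *
        push_cast
        simp
        omega
      · rw [List.count_append, count_false_wsub]
        simp only [if_true, add_zero] at hcfQm
        rw [hcfQm] at claimB
        push_cast
        simp
        omega
    | false =>
      have hpre : wsub Q ++ [false, false] <+: wsub S := by
        refine ⟨[true] ++ wsub (S.drop m), ?_⟩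
        rw [hwS]; simp [wsub]
      refine above_of_prefix hpre _ _ ?_ ?_
      · rw [List.count_append, count_true_wsub]
        push_cast
        simp
        omega
      · rw [List.count_append, count_false_wsub]
        simp only [Bool.false_eq_true, if_false] at hcfQm
        rw [hcfQm] at claimB
        push_cast
        simp
        omega
  · -- Below (wsub T)
    have hpre : wsub (T.take m) <+: wsub T := by
      refine ⟨wsub (T.drop m), ?_⟩
      rw [← wsub_append, List.take_append_drop]
    have hct : (wsub (T.take m)).count true = m := by
      rw [count_true_wsub, hlenmT]
    have hcf := count_false_wsub (T.take m)
    have hcl := count_len (T.take m)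
    rw [hlenmT] at hcl
    refine below_of_prefix hpre _ _ ?_ ?_
    · rw [hcf]; push_cast; omega
    · rw [hct]; omega

/-- If `(x, y)` is between balanced bitstrings `S` and `T`, then
`(2x + y + 1, x + y)` is between `w(S)` and `w(T)`. -/
theorem between_wsub_of_between (S T : List Bool) (hbal : BalancedBits S T)
    (x y : ℤ) (h : Between S T x y) :
    Between (wsub S) (wsub T) (2 * x + y + 1) (x + y) := by
  obtain ⟨hlen, hcnt⟩ := hbal
  rcases h with ⟨hA, hB⟩ | ⟨hB, hA⟩
  · exact Or.inl (aux_pair S T hlen hcnt x y hA hB)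
  · obtain ⟨h1, h2⟩ := aux_pair T S hlen.symm hcnt.symm x y hA hB
    exact Or.inr ⟨h2, h1⟩
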